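/- Let n ≥ 2, let U ⊆ ℝⁿ be a connected open set and let A ⊆ U be a set that is closed in U and whose Hausdorff dimension is strictly less than n − 1. Then U \ A is path-connected. -/

import Mathlib

open Set MeasureTheory
open scoped ENNReal

open Metric Module
open scoped RealInnerProductSpace

variable {E : Type*} [NormedAddCommGroup E] [InnerProductSpace ℝ E] [FiniteDimensional ℝ E]

lemma shadow_dimH_le (A : Set E) {y e : E} (hy : y ∉ A) {h : ℝ} (hh : h ≠ 0) :
    dimH {z : E | ⟪e, z - y⟫ = h ∧ (A ∩ segment ℝ y z).Nonempty} ≤ dimH A := by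
  classical
  set Ω : Set E := {a | 0 < h * ⟪e, a - y⟫} with hΩ
  set φ : E → E := fun a => y + (h / ⟪e, a - y⟫) • (a - y) with hφdef
  have hconv : Convex ℝ Ω := by
    intro a ha b hb s t hs ht hst
    simp only [Ω, mem_setOf_eq] at ha hb ⊢
    have h1 : (s • a + t • b) - y = s • (a - y) + t • (b - y) := by
      match_scalars <;> linarith
    rw [h1, inner_add_right, real_inner_smul_right, real_inner_smul_right]
    rcases lt_or_ge 0 s with hs' | hs'
    · nlinarith [mul_pos hs' ha, mul_nonneg ht hb.le]
    · have hs0 : s = 0 := le_antisymm hs' hs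
      have ht1 : t = 1 := by linarith
      rw [hs0, ht1]; nlinarith
  have hgne : ∀ a ∈ Ω, ⟪e, a - y⟫ ≠ 0 := by
    intro a ha h0
    simp only [Ω, mem_setOf_eq, h0, mul_zero, lt_irrefl] at ha
  have hφ : ContDiffOn ℝ 1 φ Ω := by
    have hg : ContDiff ℝ 1 (fun a : E => ⟪e, a - y⟫) :=
      (innerSL ℝ e).contDiff.comp (contDiff_id.sub contDiff_const)
    exact contDiffOn_const.add
      ((contDiffOn_const.div hg.contDiffOn hgne).smul
        ((contDiff_id.sub contDiff_const).contDiffOn))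
  have hsub : {z : E | ⟪e, z - y⟫ = h ∧ (A ∩ segment ℝ y z).Nonempty} ⊆ φ '' (A ∩ Ω) := by
    rintro z ⟨hz1, a, haA, haseg⟩
    rw [segment_eq_image'] at haseg
    obtain ⟨u, ⟨hu0, hu1⟩, rfl⟩ := haseg
    have hu : 0 < u := by
      rcases hu0.lt_or_eq with h' | h'
      · exact h'
      · exfalso; apply hy; rw [← h'] at haA; simpa using haA
    have hkey : (y + u • (z - y)) - y = u • (z - y) := by abel
    have hin : ⟪e, (y + u • (z - y)) - y⟫ = u * h := by
      rw [hkey, real_inner_smul_right, hz1]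
    refine ⟨y + u • (z - y), ⟨haA, ?_⟩, ?_⟩
    · simp only [Ω, mem_setOf_eq, hin]
      nlinarith [mul_self_pos.2 hh]
    · show y + (h / ⟪e, (y + u • (z - y)) - y⟫) • ((y + u • (z - y)) - y) = z
      rw [hin, hkey]
      have : h / (u * h) = u⁻¹ := by
        field_simp
      rw [this, smul_smul, inv_mul_cancel₀ hu.ne', one_smul]
      abel
  calc dimH {z : E | ⟪e, z - y⟫ = h ∧ (A ∩ segment ℝ y z).Nonempty}
      ≤ dimH (φ '' (A ∩ Ω)) := dimH_mono hsub
    _ ≤ dimH (A ∩ Ω) := hφ.dimH_image_le hconv inter_subset_right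
    _ ≤ dimH A := dimH_mono inter_subset_left


section Local
variable {n : ℕ}

lemma joined_in_ball_diff (hn : 2 ≤ n) (A : Set (EuclideanSpace ℝ (Fin n)))
    (hdim : dimH A < (↑(n - 1) : ℝ≥0∞)) (c : EuclideanSpace ℝ (Fin n)) {r : ℝ} (hr : 0 < r)
    {p q : EuclideanSpace ℝ (Fin n)} (hp : p ∈ ball c r \ A) (hq : q ∈ ball c r \ A) :
    JoinedIn (ball c r \ A) p q := by
  classical
  set e : EuclideanSpace ℝ (Fin n) := EuclideanSpace.single (⟨0, by omega⟩ : Fin n) (1 : ℝ)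
    with he_def
  have he_norm : ‖e‖ = 1 := by
    rw [he_def, EuclideanSpace.norm_single]; norm_num
  have he0 : e ≠ 0 := by
    intro h0; rw [h0] at he_norm; simp at he_norm
  have hee : ⟪e, e⟫ = 1 := by
    rw [real_inner_self_eq_norm_sq, he_norm]; norm_num
  -- choose the level t
  obtain ⟨t, ht1, ht2, ht3⟩ : ∃ t, t ∈ Ioo (-r) r ∧ t ≠ ⟪e, p - c⟫ ∧ t ≠ ⟪e, q - c⟫ := by
    have hne : (Ioo (-r) r \ {⟪e, p - c⟫, ⟪e, q - c⟫}).Nonempty :=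
      ((Set.Ioo_infinite (by linarith)).diff (Set.toFinite _)).nonempty
    obtain ⟨t, htI, htm⟩ := hne
    simp only [mem_insert_iff, mem_singleton_iff, not_or] at htm
    exact ⟨t, htI, htm.1, htm.2⟩
  set x₀ : EuclideanSpace ℝ (Fin n) := c + t • e with hx₀def
  have hx₀c : dist x₀ c = |t| := by
    rw [hx₀def, dist_eq_norm, add_sub_cancel_left, norm_smul, he_norm, mul_one, Real.norm_eq_abs]
  have htr : |t| < r := abs_lt.2 ⟨ht1.1, ht1.2⟩
  set ρ : ℝ := r - |t| with hρdef
  have hρpos : 0 < ρ := by simp [hρdef]; linarith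
  set W := (Submodule.span ℝ {e})ᗮ with hWdef
  have hWrank : finrank ℝ W = n - 1 := by
    have h1 : finrank ℝ (Submodule.span ℝ {e}) = 1 := finrank_span_singleton he0
    have h2 := Submodule.finrank_add_finrank_orthogonal (K := Submodule.span ℝ {e})
    rw [h1, finrank_euclideanSpace_fin, ← hWdef] at h2
    omega
  set ι : W → EuclideanSpace ℝ (Fin n) := fun v => x₀ + (v : EuclideanSpace ℝ (Fin n)) with hιdef
  have hι : Isometry ι := Isometry.of_dist_eq fun v w => by
    rw [hιdef]
    simp only [dist_eq_norm, add_sub_add_left_eq_sub]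
    rw [← Submodule.coe_sub, Submodule.norm_coe]
  set D := ι '' (ball 0 ρ) with hDdef
  have hDdim : dimH D = ((n - 1 : ℕ) : ℝ≥0∞) := by
    rw [hDdef, hι.dimH_image, Real.dimH_of_mem_nhds (ball_mem_nhds _ hρpos), hWrank]
  have hDball : D ⊆ ball c r := by
    rintro _ ⟨v, hv, rfl⟩
    rw [mem_ball]
    calc dist (ι v) c ≤ dist (ι v) x₀ + dist x₀ c := dist_triangle _ _ _
      _ = ‖(v : EuclideanSpace ℝ (Fin n))‖ + |t| := by
          rw [hx₀c, hιdef]; simp [dist_eq_norm]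
      _ < ρ + |t| := by
          have : ‖(v : EuclideanSpace ℝ (Fin n))‖ < ρ := by
            rw [Submodule.norm_coe]; simpa [dist_eq_norm] using hv
          linarith
      _ = r := by rw [hρdef]; ring
  have hDinner : ∀ y : EuclideanSpace ℝ (Fin n), ∀ z ∈ D, ⟪e, z - y⟫ = ⟪e, x₀ - y⟫ := by
    rintro y _ ⟨v, hv, rfl⟩
    have hv0 : ⟪e, (v : EuclideanSpace ℝ (Fin n))⟫ = 0 :=
      v.2 e (Submodule.mem_span_singleton_self e)
    rw [hιdef]
    have : x₀ + (v : EuclideanSpace ℝ (Fin n)) - y = (x₀ - y) + (v : EuclideanSpace ℝ (Fin n)) := by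
      abel
    rw [this, inner_add_right, hv0, add_zero]
  have hinner_ne : ∀ y : EuclideanSpace ℝ (Fin n), t ≠ ⟪e, y - c⟫ → ⟪e, x₀ - y⟫ ≠ 0 := by
    intro y hty h0
    apply hty
    have : x₀ - y = (c - y) + t • e := by rw [hx₀def]; abel
    rw [this, inner_add_right, real_inner_smul_right, hee, mul_one] at h0
    have : ⟪e, y - c⟫ = -⟪e, c - y⟫ := by rw [← inner_neg_right]; congr 1; abel
    rw [this]; linarith
  have hp_ne := hinner_ne p ht2
  have hq_ne := hinner_ne q ht3
  set S₁ := {z : EuclideanSpace ℝ (Fin n) |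
    ⟪e, z - p⟫ = ⟪e, x₀ - p⟫ ∧ (A ∩ segment ℝ p z).Nonempty} with hS₁def
  set S₂ := {z : EuclideanSpace ℝ (Fin n) |
    ⟪e, z - q⟫ = ⟪e, x₀ - q⟫ ∧ (A ∩ segment ℝ q z).Nonempty} with hS₂def
  have h₁ : dimH S₁ ≤ dimH A := shadow_dimH_le A hp.2 hp_ne
  have h₂ : dimH S₂ ≤ dimH A := shadow_dimH_le A hq.2 hq_ne
  have hnotsub : ¬ D ⊆ S₁ ∪ S₂ := by
    intro hsub
    have hle := dimH_mono hsub
    rw [hDdim, dimH_union] at hle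
    exact hdim.not_ge (hle.trans (max_le h₁ h₂))
  obtain ⟨z, hzD, hz⟩ := not_subset.1 hnotsub
  have hz1 : ¬ (A ∩ segment ℝ p z).Nonempty := fun hne => hz (Or.inl ⟨hDinner p z hzD, hne⟩)
  have hz2 : ¬ (A ∩ segment ℝ q z).Nonempty := fun hne => hz (Or.inr ⟨hDinner q z hzD, hne⟩)
  have hzball := hDball hzD
  have hseg1 : segment ℝ p z ⊆ ball c r \ A := fun w hw =>
    ⟨(convex_ball c r).segment_subset hp.1 hzball hw, fun hwA => hz1 ⟨w, hwA, hw⟩⟩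
  have hseg2 : segment ℝ q z ⊆ ball c r \ A := fun w hw =>
    ⟨(convex_ball c r).segment_subset hq.1 hzball hw, fun hwA => hz2 ⟨w, hwA, hw⟩⟩
  have j1 : JoinedIn (ball c r \ A) p z :=
    (((convex_segment p z).isPathConnected ⟨p, left_mem_segment ℝ p z⟩).joinedIn p
      (left_mem_segment ℝ p z) z (right_mem_segment ℝ p z)).mono hseg1
  have j2 : JoinedIn (ball c r \ A) q z :=
    (((convex_segment q z).isPathConnected ⟨q, left_mem_segment ℝ q z⟩).joinedIn q
      (left_mem_segment ℝ q z) z (right_mem_segment ℝ q z)).mono hseg2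
  exact j1.trans j2.symm

end Local

lemma ball_diff_isPathConnected {n : ℕ} (hn : 2 ≤ n) (A : Set (EuclideanSpace ℝ (Fin n)))
    (hdim : dimH A < (↑(n - 1) : ℝ≥0∞)) (c : EuclideanSpace ℝ (Fin n)) {r : ℝ} (hr : 0 < r) :
    IsPathConnected (ball c r \ A) := by
  have hdlt : dimH A < (finrank ℝ (EuclideanSpace ℝ (Fin n)) : ℝ≥0∞) := by
    rw [finrank_euclideanSpace_fin]
    exact hdim.trans_le (by exact_mod_cast Nat.cast_le.2 (Nat.sub_le n 1))
  have hdense : Dense Aᶜ := dense_compl_of_dimH_lt_finrank hdlt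
  obtain ⟨x₀, hx₀A, hx₀ball⟩ := hdense.exists_mem_open isOpen_ball ⟨c, mem_ball_self hr⟩
  exact ⟨x₀, ⟨hx₀ball, hx₀A⟩, fun _ hq => joined_in_ball_diff hn A hdim c hr ⟨hx₀ball, hx₀A⟩ hq⟩

/-- If `U ⊆ ℝⁿ` (`n ≥ 2`) is a connected open set and `A ⊆ U` is closed in `U`
with Hausdorff dimension strictly less than `n - 1`, then `U \ A` is path-connected. -/
theorem compl_of_small_dimH_pathConnected (n : ℕ) (hn : 2 ≤ n)
    (U : Set (EuclideanSpace ℝ (Fin n))) (hU : IsOpen U) (hUc : IsConnected U)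
    (A : Set (EuclideanSpace ℝ (Fin n))) (hAU : A ⊆ U)
    (hAclosed : IsClosed ((↑·) ⁻¹' A : Set U))
    (hdim : dimH A < (↑(n - 1) : ℝ≥0∞)) :
    IsPathConnected (U \ A) := by
  classical
  have hdlt : dimH A < (finrank ℝ (EuclideanSpace ℝ (Fin n)) : ℝ≥0∞) := by
    rw [finrank_euclideanSpace_fin]
    exact hdim.trans_le (by exact_mod_cast Nat.cast_le.2 (Nat.sub_le n 1))
  have hdense : Dense Aᶜ := dense_compl_of_dimH_lt_finrank hdlt
  -- pick a base point x₀ ∈ U \ A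
  obtain ⟨y₀, hy₀⟩ := hUc.nonempty
  obtain ⟨r₀, hr₀, hball₀⟩ := Metric.isOpen_iff.1 hU y₀ hy₀
  obtain ⟨x₀, hx₀A, hx₀ball⟩ := hdense.exists_mem_open isOpen_ball ⟨y₀, mem_ball_self hr₀⟩
  have hx₀U : x₀ ∈ U := hball₀ hx₀ball
  set P : EuclideanSpace ℝ (Fin n) → Prop := fun z => JoinedIn (U \ A) x₀ z with hPdef
  set T := {y : EuclideanSpace ℝ (Fin n) |
    ∃ r > 0, ball y r ⊆ U ∧ ∀ z ∈ ball y r \ A, P z} with hTdef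
  set V := {y : EuclideanSpace ℝ (Fin n) |
    ∃ r > 0, ball y r ⊆ U ∧ ∀ z ∈ ball y r \ A, ¬ P z} with hVdef
  have hTopen : IsOpen T := by
    rw [Metric.isOpen_iff]
    rintro y ⟨r, hr, hsub, hall⟩
    refine ⟨r, hr, fun y' hy' => ?_⟩
    have hsb : ball y' (r - dist y' y) ⊆ ball y r := ball_subset_ball' (by linarith)
    exact ⟨r - dist y' y, by simpa [mem_ball] using hy', hsb.trans hsub,
      fun z hz => hall z ⟨hsb hz.1, hz.2⟩⟩
  have hVopen : IsOpen V := by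
    rw [Metric.isOpen_iff]
    rintro y ⟨r, hr, hsub, hall⟩
    refine ⟨r, hr, fun y' hy' => ?_⟩
    have hsb : ball y' (r - dist y' y) ⊆ ball y r := ball_subset_ball' (by linarith)
    exact ⟨r - dist y' y, by simpa [mem_ball] using hy', hsb.trans hsub,
      fun z hz => hall z ⟨hsb hz.1, hz.2⟩⟩
  have hcover : U ⊆ T ∪ V := by
    intro y hy
    obtain ⟨r, hr, hsub⟩ := Metric.isOpen_iff.1 hU y hy
    have hpc := ball_diff_isPathConnected hn A hdim y hr
    by_cases hex : ∃ z ∈ ball y r \ A, P z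
    · left
      obtain ⟨w, hw, hPw⟩ := hex
      exact ⟨r, hr, hsub, fun z hz =>
        hPw.trans ((hpc.joinedIn w hw z hz).mono fun u hu => ⟨hsub hu.1, hu.2⟩)⟩
    · right
      exact ⟨r, hr, hsub, fun z hz hPz => hex ⟨z, hz, hPz⟩⟩
  have hTx : x₀ ∈ T := by
    obtain ⟨r, hr, hsub⟩ := Metric.isOpen_iff.1 hU x₀ hx₀U
    have hpc := ball_diff_isPathConnected hn A hdim x₀ hr
    exact ⟨r, hr, hsub, fun z hz =>
      (hpc.joinedIn x₀ ⟨mem_ball_self hr, hx₀A⟩ z hz).mono fun u hu => ⟨hsub hu.1, hu.2⟩⟩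
  have hdisj : ¬ (U ∩ (T ∩ V)).Nonempty := by
    rintro ⟨y, _, ⟨r₁, hr₁, hsub₁, hall₁⟩, ⟨r₂, hr₂, hsub₂, hall₂⟩⟩
    obtain ⟨z, hzA, hzball⟩ := hdense.exists_mem_open isOpen_ball
      ⟨y, mem_ball_self (lt_min hr₁ hr₂)⟩
    exact hall₂ z ⟨ball_subset_ball (min_le_right r₁ r₂) hzball, hzA⟩
      (hall₁ z ⟨ball_subset_ball (min_le_left r₁ r₂) hzball, hzA⟩)
  have hUV : ¬ (U ∩ V).Nonempty := by
    intro hV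
    exact hdisj (by
      exact hUc.isPreconnected T V hTopen hVopen hcover ⟨x₀, hx₀U, hTx⟩ hV)
  refine ⟨x₀, ⟨hx₀U, hx₀A⟩, fun {y} hy => ?_⟩
  rcases hcover hy.1 with hyT | hyV
  · obtain ⟨r, hr, hsub, hall⟩ := hyT
    exact hall y ⟨mem_ball_self hr, hy.2⟩
  · exact absurd ⟨y, hy.1, hyV⟩ hUV
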